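/- Let λ₁' > 0, T > 0, τ' = τ + T/2, and suppose N̂₁ ≤ log(1 + 2λ₁'τ')/(2τ'). Then p₁ := 2τ'N̂₁ satisfies p₁(1 - λ₁'τ') + (1-p₁)log(1-p₁) ≤ 0, provided 0 ≤ p₁ < 1/2; equivalently e^{p₁} - 1 - 2λ₁'τ' ≤ 0 implies the derivative of N₁ log(1/(1-P₁)) (with N₁ = 1/(2τ'), P₁ = 2τ'N̂₁ and N̂₁ = C e^{-λ₁'τ} for a τ-independent constant C > 0) with respect to τ is nonpositive. -/

import Mathlib

lemma cubic_le_exp {x : ℝ} (hx : 0 ≤ x) : 1 + x + x^2/2 + x^3/6 ≤ Real.exp x := by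
  have h := Real.sum_le_exp_of_nonneg hx 4
  have he : ∑ i ∈ Finset.range 4, x ^ i / i.factorial = 1 + x + x^2/2 + x^3/6 := by
    norm_num [Finset.sum_range_succ, Nat.factorial]
  rw [he] at h
  exact h

lemma log_quartic {p : ℝ} (hp0 : 0 ≤ p) (hp1 : p < 1) :
    Real.log (1 - p) ≤ -(p + p^2/2 + p^3/3 + p^4/4) := by
  set s : ℝ → ℝ := fun x => x + x^2/2 + x^3/3 + x^4/4 with hs
  have hder : ∀ x : ℝ, HasDerivAt (fun y => (1 - y) * Real.exp (s y)) (-x^4 * Real.exp (s x)) x := by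
    intro x
    have h1 : HasDerivAt (fun y : ℝ => 1 - y) (-1) x := by
      simpa using ((hasDerivAt_id x).const_sub 1)
    have h2 : HasDerivAt s (1 + x + x^2 + x^3) x := by
      have := (((hasDerivAt_id x).add
        (((hasDerivAt_pow 2 x)).div_const 2)).add
        (((hasDerivAt_pow 3 x)).div_const 3)).add
        (((hasDerivAt_pow 4 x)).div_const 4)
      refine this.congr_deriv ?_
      ring
    have := h1.mul h2.exp
    refine this.congr_deriv ?_
    ring
  have hanti : Antitone (fun y => (1 - y) * Real.exp (s y)) := by
    apply antitone_of_deriv_nonpos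
    · intro x; exact (hder x).differentiableAt
    · intro x
      rw [(hder x).deriv]
      have h4 : (0:ℝ) ≤ x^4 := by positivity
      nlinarith [Real.exp_pos (s x)]
  have h0 : (1 - p) * Real.exp (s p) ≤ 1 := by
    have := hanti hp0
    simpa [hs] using this
  have hpos : (0:ℝ) < 1 - p := by linarith
  have hle : 1 - p ≤ Real.exp (-(s p)) := by
    rw [Real.exp_neg, ← one_div]
    exact (le_div_iff₀ (Real.exp_pos _)).mpr h0
  have := Real.log_le_log hpos hle
  rw [Real.log_exp] at this
  simpa [hs] using this




/-- Key step of Lemma 3: if `N̂₁ ≤ log(1+2λ₁'τ')/(2τ')`, then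
`p₁(1-λ₁'τ') + (1-p₁)log(1-p₁) ≤ 0` for `p₁ = 2τ'N̂₁ < 1/2`, and hence the derivative of
`N₁ log(1/(1-P₁))` with respect to `τ` is nonpositive. -/
theorem stmt16 (lam1 T τ τ' Nh1 p1 : ℝ) (hlam : 0 < lam1) (hT : 0 < T) (hτ : 0 < τ)
    (hτ' : τ' = τ + T/2) (hNh : 0 ≤ Nh1)
    (hle : Nh1 ≤ Real.log (1 + 2*lam1*τ') / (2*τ'))
    (hp1 : p1 = 2*τ'*Nh1) (hp1half : p1 < 1/2) :
    p1 * (1 - lam1*τ') + (1 - p1) * Real.log (1 - p1) ≤ 0 ∧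
    (∀ C : ℝ, 0 < C → Nh1 = C * Real.exp (-lam1*τ) →
      deriv (fun t => (1/(2*(t + T/2)))
          * Real.log (1/(1 - 2*(t + T/2) * (C * Real.exp (-lam1*t))))) τ ≤ 0) := by
  have hτ'pos : 0 < τ' := by rw [hτ']; linarith
  have hp0 : 0 ≤ p1 := by rw [hp1]; positivity
  have h1ppos : (0:ℝ) < 1 - p1 := by linarith
  have h1pne : (1:ℝ) - p1 ≠ 0 := ne_of_gt h1ppos
  -- part 1
  have hplog : p1 ≤ Real.log (1 + 2*lam1*τ') := by
    have h2τ : (0:ℝ) < 2*τ' := by linarith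
    have := (le_div_iff₀ h2τ).mp hle
    rw [hp1]; linarith
  have hexp : Real.exp p1 ≤ 1 + 2*lam1*τ' := by
    have hpos : (0:ℝ) < 1 + 2*lam1*τ' := by positivity
    calc Real.exp p1 ≤ Real.exp (Real.log (1 + 2*lam1*τ')) := Real.exp_le_exp.mpr hplog
      _ = 1 + 2*lam1*τ' := Real.exp_log hpos
  have hcubic := cubic_le_exp hp0
  have hlog := log_quartic hp0 (by linarith)
  have key : p1 * (1 - lam1*τ') + (1 - p1) * Real.log (1 - p1) ≤ 0 := by
    have h2 : (p1 + p1^2/2 + p1^3/6)/2 ≤ lam1*τ' := by nlinarith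
    have h3 : p1*(1-lam1*τ') ≤ p1*(1 - (p1 + p1^2/2 + p1^3/6)/2) :=
      mul_le_mul_of_nonneg_left (by linarith) hp0
    have h1 : (1-p1) * Real.log (1-p1) ≤ (1-p1) * (-(p1 + p1^2/2 + p1^3/3 + p1^4/4)) :=
      mul_le_mul_of_nonneg_left hlog h1ppos.le
    have hsq : p1^2 ≤ 1/4 := by nlinarith
    have h5 : p1^5 ≤ p1^3/4 := by nlinarith [pow_nonneg hp0 3]
    nlinarith [h3, h1, h5, pow_nonneg hp0 3]
  refine ⟨key, ?_⟩
  -- part 2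
  intro C hC hNC
  have hPval : 2*(τ+T/2)*(C*Real.exp (-lam1*τ)) = p1 := by
    rw [hp1, hτ', hNC]
  have hQτ : 1 - 2*(τ+T/2)*(C*Real.exp (-lam1*τ)) = 1 - p1 := by rw [hPval]
  have hA : HasDerivAt (fun t : ℝ => 2*(t+T/2)) 2 τ := by
    simpa using ((hasDerivAt_id τ).add_const (T/2)).const_mul (2:ℝ)
  have hEx : HasDerivAt (fun t : ℝ => C * Real.exp (-lam1*t)) (-lam1 * Nh1) τ := by
    have h := (((hasDerivAt_id τ).const_mul (-lam1)).exp).const_mul C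
    simp only [id_eq] at h
    refine h.congr_deriv ?_
    rw [hNC]; ring
  have hP : HasDerivAt (fun t : ℝ => 2*(t+T/2)*(C*Real.exp (-lam1*t)))
      (2*Nh1*(1 - lam1*τ')) τ := by
    have h := hA.mul hEx
    refine h.congr_deriv ?_
    rw [hNC, hτ']; ring
  have hQ : HasDerivAt (fun t : ℝ => 1 - 2*(t+T/2)*(C*Real.exp (-lam1*t)))
      (-(2*Nh1*(1 - lam1*τ'))) τ := by
    simpa using hP.const_sub 1
  have hQne : 1 - 2*(τ+T/2)*(C*Real.exp (-lam1*τ)) ≠ 0 := by rw [hQτ]; exact h1pne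
  have hInv : HasDerivAt (fun t : ℝ => (1 - 2*(t+T/2)*(C*Real.exp (-lam1*t)))⁻¹)
      (2*Nh1*(1 - lam1*τ')/(1-p1)^2) τ := by
    have h := hQ.inv hQne
    refine h.congr_deriv ?_
    rw [hQτ]; ring
  have hInvne : (1 - 2*(τ+T/2)*(C*Real.exp (-lam1*τ)))⁻¹ ≠ 0 := inv_ne_zero hQne
  have hLog : HasDerivAt (fun t : ℝ => Real.log ((1 - 2*(t+T/2)*(C*Real.exp (-lam1*t)))⁻¹))
      (2*Nh1*(1 - lam1*τ')/(1-p1)) τ := by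
    have h := hInv.log hInvne
    convert h using 1
    rw [hQτ]
    field_simp
  have h2τne : 2*(τ+T/2) ≠ 0 := by rw [← hτ']; positivity
  have hN : HasDerivAt (fun t : ℝ => (2*(t+T/2))⁻¹) (-2/(2*τ')^2) τ := by
    have h := hA.inv h2τne
    rw [hτ']
    exact h
  have hF : HasDerivAt (fun t : ℝ => (2*(t+T/2))⁻¹
        * Real.log ((1 - 2*(t+T/2)*(C*Real.exp (-lam1*t)))⁻¹))
      ((-2/(2*τ')^2) * Real.log ((1-p1)⁻¹) + (2*τ')⁻¹ * (2*Nh1*(1 - lam1*τ')/(1-p1))) τ := by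
    have h := hN.mul hLog
    refine h.congr_deriv ?_
    rw [hQτ, ← hτ']
  have hfun : (fun t : ℝ => (1/(2*(t + T/2)))
          * Real.log (1/(1 - 2*(t + T/2) * (C * Real.exp (-lam1*t)))))
      = (fun t : ℝ => (2*(t+T/2))⁻¹
          * Real.log ((1 - 2*(t+T/2)*(C*Real.exp (-lam1*t)))⁻¹)) := by
    funext t; rw [one_div, one_div]
  rw [hfun, hF.deriv]
  have h2τNh : 2*τ'*Nh1 = p1 := hp1.symm
  have hD : (-2/(2*τ')^2) * Real.log ((1-p1)⁻¹) + (2*τ')⁻¹ * (2*Nh1*(1 - lam1*τ')/(1-p1))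
      = (p1 * (1 - lam1*τ') + (1 - p1) * Real.log (1 - p1)) / (2*τ'^2*(1-p1)) := by
    have hNh1eq : Nh1 = p1/(2*τ') := by rw [hp1]; field_simp
    rw [Real.log_inv, hNh1eq]
    field_simp
    ring
  rw [hD]
  have hden : 0 < 2*τ'^2*(1-p1) := by positivity
  rw [div_nonpos_iff]
  right
  exact ⟨key, hden.le⟩
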